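/- Assume Assumption 1 holds and fix a positive integer q. If the rank of C exceeds q (i.e., α_{q+1}(C) ≠ 0; in particular this includes infinite rank), then with probability 1, i(Ĉ_n, δ_n) > q for all sufficiently large n. -/
import Mathlib


open MeasureTheory Filter

/-- Abstract singular-value data on the (Hilbert) space `𝒮` of Hilbert–Schmidt operators on a
separable infinite-dimensional real Hilbert space `H`.  `IsPos S` encodes `S ∈ 𝒮⁺` (nonnegative
self-adjoint), and `α S l` is the `(l+1)`-st singular value of `S` (so `α S 0 ≥ α S 1 ≥ … ≥ 0`,
listed with multiplicity).  The field `mirsky` encodes the Schmidt–Mirsky fact that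
`S ↦ ‖S - Q_j(S)‖_𝒮 = (∑_{l > j} α_l(S)²)^{1/2}` (distance to the rank-`j` operators)
is `1`-Lipschitz in the Hilbert–Schmidt norm. -/
structure SingularValueData (𝒮 : Type*) [NormedAddCommGroup 𝒮] [MeasurableSpace 𝒮] where
  IsPos : 𝒮 → Prop
  α : 𝒮 → ℕ → ℝ
  nonneg : ∀ S l, 0 ≤ α S l
  antitone : ∀ S l, α S (l + 1) ≤ α S l
  sq_summable : ∀ S, Summable fun l => α S l ^ 2
  mirsky : ∀ A B : 𝒮, ∀ j : ℕ,
    Real.sqrt (∑' l, α A (j + l) ^ 2) ≤ Real.sqrt (∑' l, α B (j + l) ^ 2) + ‖A - B‖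
  measurable_alpha : ∀ l, Measurable fun S => α S l
  measurableSet_pos : MeasurableSet {S | IsPos S}
  measurable_tail : ∀ j, Measurable fun S => Real.sqrt (∑' l, α S (j + l) ^ 2)

namespace SingularValueData

variable {𝒮 : Type*} [NormedAddCommGroup 𝒮] [MeasurableSpace 𝒮]

/-- `tail S j = ‖S - Q_j(S)‖_𝒮 = (∑_{l > j} α_l(S)²)^{1/2}` (singular values `1`-indexed). -/
noncomputable def tail (sv : SingularValueData 𝒮) (S : 𝒮) (j : ℕ) : ℝ :=
  Real.sqrt (∑' l, sv.α S (j + l) ^ 2)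

/-- `i(S, δ) = min {j ≥ 1 : ‖S - Q_j(S)‖_𝒮 < δ}`. -/
noncomputable def iDim (sv : SingularValueData 𝒮) (S : 𝒮) (δ : ℝ) : ℕ :=
  sInf {j | 1 ≤ j ∧ sv.tail S j < δ}

end SingularValueData

/-- Under Assumption 1, if the rank of `C` exceeds the fixed positive integer
`q` (i.e. `α_{q+1}(C) ≠ 0`, which in `0`-indexed notation reads `sv.α C q ≠ 0`; this includes
the infinite-rank case), then almost surely `i(Ĉ_n, δ_n) > q` for all sufficiently large `n`. -/
theorem rank_exceeds_q_detection
    {𝒮 : Type*} [NormedAddCommGroup 𝒮] [MeasurableSpace 𝒮]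
    (sv : SingularValueData 𝒮)
    {Ω : Type*} [MeasurableSpace Ω] (ℙ : Measure Ω) [IsProbabilityMeasure ℙ]
    (Chat : ℕ → Ω → 𝒮) (hChat : ∀ n, Measurable (Chat n))
    (C : 𝒮) (hC : sv.IsPos C)
    (R : ℕ → ℝ) (hRpos : ∀ n, 0 < R n) (hRanti : StrictAnti R)
    (hRlim : Tendsto R atTop (nhds 0))
    (hrate : ∀ᵐ ω ∂ℙ, ∀ᶠ n in atTop, ‖Chat n ω - C‖ < R n)
    (ε : ℝ) (hε : 0 < ε) (δ : ℕ → ℝ) (hδ : ∀ n, δ n = (1 + ε) * R n)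
    (q : ℕ) (hq : 1 ≤ q) (hrank : sv.α C q ≠ 0) :
    ∀ᵐ ω ∂ℙ, ∀ᶠ n in atTop, q < sv.iDim (Chat n ω) (δ n) := by
  -- summability of shifted tails
  have hsum : ∀ (S : 𝒮) (j : ℕ), Summable fun l => sv.α S (j + l) ^ 2 := by
    intro S j
    exact (sv.sq_summable S).comp_injective (add_right_injective j)
  -- tails are antitone in j
  have tail_anti : ∀ S : 𝒮, Antitone (sv.tail S) := by
    intro S
    apply antitone_nat_of_succ_le
    intro j
    unfold SingularValueData.tail
    apply Real.sqrt_le_sqrt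
    have h1 : ∑' l, sv.α S (j + l) ^ 2
        = sv.α S (j + 0) ^ 2 + ∑' l, sv.α S (j + (l + 1)) ^ 2 :=
      Summable.tsum_eq_zero_add (hsum S j)
    have h2 : (∑' l, sv.α S (j + 1 + l) ^ 2) = ∑' l, sv.α S (j + (l + 1)) ^ 2 := by
      apply tsum_congr
      intro l
      ring_nf
    rw [h2, h1]
    have := sq_nonneg (sv.α S (j + 0))
    linarith
  -- positivity of tail C q
  have hαq : 0 < sv.α C q := (sv.nonneg C q).lt_of_ne (Ne.symm hrank)
  have htCq : 0 < sv.tail C q := by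
    have hle : sv.α C q ^ 2 ≤ ∑' l, sv.α C (q + l) ^ 2 := by
      have := Summable.le_tsum (hsum C q) 0 (fun l _ => sq_nonneg _)
      simpa using this
    have : Real.sqrt (sv.α C q ^ 2) ≤ sv.tail C q := Real.sqrt_le_sqrt hle
    rw [Real.sqrt_sq hαq.le] at this
    linarith
  -- the defining set of iDim is nonempty
  have hne : ∀ (S : 𝒮) (d : ℝ), 0 < d →
      {j | 1 ≤ j ∧ sv.tail S j < d}.Nonempty := by
    intro S d hd
    have htend : Tendsto (fun j => ∑' l, sv.α S (l + j) ^ 2) atTop (nhds 0) :=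
      tendsto_sum_nat_add (fun l => sv.α S l ^ 2)
    have hev : ∀ᶠ j in atTop, (∑' l, sv.α S (l + j) ^ 2) < d ^ 2 := by
      have := htend.eventually (Filter.Tendsto.eventually_lt_const (by positivity : (0:ℝ) < d ^ 2) tendsto_const_nhds)
      filter_upwards [htend (Iio_mem_nhds (by positivity : (0:ℝ) < d ^ 2))] with j hj
      exact hj
    obtain ⟨j, hj1, hj2⟩ := ((hev.and (eventually_ge_atTop 1)).exists)
    refine ⟨j, hj2, ?_⟩
    have heq : (∑' l, sv.α S (j + l) ^ 2) = ∑' l, sv.α S (l + j) ^ 2 := by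
      apply tsum_congr; intro l; rw [add_comm]
    unfold SingularValueData.tail
    rw [heq]
    calc Real.sqrt (∑' l, sv.α S (l + j) ^ 2) < Real.sqrt (d ^ 2) := by
          apply (Real.sqrt_lt_sqrt (tsum_nonneg fun l => sq_nonneg _) hj1)
      _ = d := Real.sqrt_sq hd.le
  -- eventually (2+ε) R n < tail C q
  have hevR : ∀ᶠ n in atTop, (2 + ε) * R n < sv.tail C q := by
    have : Tendsto (fun n => (2 + ε) * R n) atTop (nhds 0) := by
      simpa using hRlim.const_mul (2 + ε)
    exact this (Iio_mem_nhds htCq)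
  filter_upwards [hrate] with ω hω
  filter_upwards [hω, hevR] with n hn1 hn2
  -- now show q < iDim
  have hδn : δ n = (1 + ε) * R n := hδ n
  have hdpos : 0 < δ n := by
    rw [hδn]; have := hRpos n; nlinarith
  have hSne := hne (Chat n ω) (δ n) hdpos
  have hmem := Nat.sInf_mem hSne
  by_contra hcon
  push_neg at hcon
  have hcon' : sInf {j | 1 ≤ j ∧ sv.tail (Chat n ω) j < δ n} ≤ q := hcon
  obtain ⟨hj1, hj2⟩ := hmem
  set J := sInf {j | 1 ≤ j ∧ sv.tail (Chat n ω) j < δ n} with hJ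
  have h3 : sv.tail C q ≤ sv.tail C J := tail_anti C hcon'
  have h4 : sv.tail C J ≤ sv.tail (Chat n ω) J + ‖C - Chat n ω‖ :=
    sv.mirsky C (Chat n ω) J
  have h5 : ‖C - Chat n ω‖ < R n := by rwa [norm_sub_rev]
  rw [hδn] at hj2
  linarith
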